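/- Let X be binomial with S trials and success probability p = 1/2 + 1/(2n) where n ≥ 2. If Pr[X ≤ S/2] ≤ n^(−c) for some c ≥ 1, then S ≥ K·n² for some absolute constant K > 0 (for all sufficiently large n). -/

import Mathlib

open Finset

lemma sum_k_choose (s : ℕ) : ∑ k ∈ range (s+2), k * (s+1).choose k = (s+1) * 2^s := by
  rw [Finset.sum_range_succ']
  simp only [Nat.zero_eq, zero_mul, add_zero]
  have : ∀ k, (k+1) * (s+1).choose (k+1) = (s+1) * s.choose k := by
    intro k
    rw [mul_comm, Nat.add_one_mul_choose_eq]
  simp only [this]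
  rw [← Finset.mul_sum, Nat.sum_range_choose]

lemma sum_kk_choose (s : ℕ) :
    ∑ k ∈ range (s+3), k * (k-1) * (s+2).choose k = (s+2) * ((s+1) * 2^s) := by
  rw [Finset.sum_range_succ', Finset.sum_range_succ']
  have h0 : (0:ℕ) * (0-1) * (s+2).choose 0 = 0 := by simp
  have h1 : (0+1) * ((0+1)-1) * (s+2).choose (0+1) = 0 := by simp
  rw [h0, h1, add_zero, add_zero]
  have : ∀ k, (k+1+1) * ((k+1+1)-1) * (s+2).choose (k+1+1) = (s+2) * ((s+1) * s.choose k) := by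
    intro k
    have e1 : (s+2).choose (k+2) * (k+2) = (s+2) * (s+1).choose (k+1) := by
      rw [← Nat.add_one_mul_choose_eq]
    have e2 : (s+1).choose (k+1) * (k+1) = (s+1) * s.choose k := by
      rw [← Nat.add_one_mul_choose_eq]
    have e0 : (k+1+1) - 1 = k+1 := rfl
    calc (k+1+1) * ((k+1+1)-1) * (s+2).choose (k+1+1)
        = ((s+2).choose (k+2) * (k+2)) * (k+1) := by rw [e0]; ring
      _ = (s+2) * ((s+1).choose (k+1) * (k+1)) := by rw [e1]; ring
      _ = (s+2) * ((s+1) * s.choose k) := by rw [e2]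
  simp only [this]
  rw [← Finset.mul_sum, ← Finset.mul_sum, Nat.sum_range_choose]

lemma var_id (S : ℕ) :
    ∑ k ∈ range (S+1), (S.choose k : ℝ) * ((S:ℝ) - 2*k)^2 = (S:ℝ) * 2^S := by
  match S with
  | 0 => norm_num
  | 1 => norm_num [Finset.sum_range_succ]
  | (s+2) =>
    have key : ∀ k : ℕ, ((s+2).choose k : ℝ) * (((s+2:ℕ):ℝ) - 2*k)^2
        = ((s+2:ℕ):ℝ)^2 * ((s+2).choose k : ℝ)
          - 4*((s+2:ℕ):ℝ)*((k * (s+2).choose k : ℕ):ℝ)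
          + 4*((k*(k-1) * (s+2).choose k : ℕ):ℝ)
          + 4*((k * (s+2).choose k : ℕ):ℝ) := by
      intro k
      rcases k with _|k
      · push_cast; ring
      · have e0 : (k+1) - 1 = k := rfl
        rw [e0]; push_cast; ring
    have c0 : ∑ k ∈ range (s+3), ((s+2).choose k : ℝ) = 2^(s+2) := by
      rw [← Nat.cast_sum]
      rw [show s+3 = (s+2)+1 from rfl, Nat.sum_range_choose]
      push_cast; ring
    have c1 : ∑ k ∈ range (s+3), ((k * (s+2).choose k : ℕ):ℝ) = ((s+2) * 2^(s+1) : ℕ) := by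
      rw [← Nat.cast_sum, show s+3 = (s+1)+2 from rfl, sum_k_choose (s+1)]
    have c2 : ∑ k ∈ range (s+3), ((k*(k-1) * (s+2).choose k : ℕ):ℝ) = ((s+2)*((s+1)*2^s) : ℕ) := by
      rw [← Nat.cast_sum, sum_kk_choose s]
    calc ∑ k ∈ range (s+2+1), ((s+2).choose k : ℝ) * (((s+2:ℕ):ℝ) - 2*k)^2
        = ∑ k ∈ range (s+3), (((s+2:ℕ):ℝ)^2 * ((s+2).choose k : ℝ)
          - 4*((s+2:ℕ):ℝ)*((k * (s+2).choose k : ℕ):ℝ)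
          + 4*((k*(k-1) * (s+2).choose k : ℕ):ℝ)
          + 4*((k * (s+2).choose k : ℕ):ℝ)) := Finset.sum_congr rfl (fun k _ => key k)
      _ = ((s+2:ℕ):ℝ)^2 * (∑ k ∈ range (s+3), ((s+2).choose k : ℝ))
          - 4*((s+2:ℕ):ℝ) * (∑ k ∈ range (s+3), ((k * (s+2).choose k : ℕ):ℝ))
          + 4*(∑ k ∈ range (s+3), ((k*(k-1) * (s+2).choose k : ℕ):ℝ))
          + 4*(∑ k ∈ range (s+3), ((k * (s+2).choose k : ℕ):ℝ)) := by
        simp [Finset.sum_add_distrib, Finset.sum_sub_distrib, Finset.mul_sum]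
      _ = ((s+2:ℕ):ℝ) * 2^(s+2) := by
        rw [c0, c1, c2]
        push_cast
        ring

lemma half_sum (S : ℕ) : 2^S ≤ 2 * ∑ k ∈ range (S/2+1), S.choose k := by
  set h := S/2 with hh
  have hrefl : (∑ j ∈ Ico 0 (h+1), S.choose (S - j)) = ∑ j ∈ Ico (S+1-(h+1)) (S+1-0), S.choose j :=
    Finset.sum_Ico_reflect _ 0 (by omega)
  have hsymm : (∑ j ∈ Ico 0 (h+1), S.choose (S - j)) = ∑ j ∈ range (h+1), S.choose j := by
    rw [← Finset.range_eq_Ico]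
    refine Finset.sum_congr rfl (fun j hj => ?_)
    rw [Finset.mem_range] at hj
    exact Nat.choose_symm (by omega)
  have hsub : (∑ j ∈ Ico (h+1) (S+1), S.choose j) ≤ ∑ j ∈ Ico (S+1-(h+1)) (S+1-0), S.choose j := by
    apply Finset.sum_le_sum_of_subset
    apply Finset.Ico_subset_Ico (by omega) (by omega)
  have hsplit : (∑ j ∈ range (h+1), S.choose j) + ∑ j ∈ Ico (h+1) (S+1), S.choose j
      = ∑ j ∈ range (S+1), S.choose j := Finset.sum_range_add_sum_Ico _ (by omega)
  have htot : (∑ j ∈ range (S+1), S.choose j) = 2^S := Nat.sum_range_choose S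
  omega

lemma cheb (S m T : ℕ) (hsq : S < m*m) (hT : ∀ k, k < T → 2*k + 2*m + 2 ≤ S) :
    4 * ∑ k ∈ range T, (S.choose k : ℝ) ≤ 2^S := by
  rcases Nat.eq_zero_or_pos T with h0 | hpos
  · rw [h0]; simp only [Finset.range_zero, Finset.sum_empty, mul_zero]; positivity
  · have hS : 0 < S := by have := hT 0 hpos; omega
    have hSr : (0:ℝ) < S := by exact_mod_cast hS
    have hb : ∀ k ∈ range T, (S:ℝ) * (4 * (S.choose k : ℝ))
        ≤ (S.choose k : ℝ) * ((S:ℝ) - 2*k)^2 := by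
      intro k hk
      rw [Finset.mem_range] at hk
      have h2k : 2*k + 2*m + 2 ≤ S := hT k hk
      have hge : 2*(m:ℝ) + 2 ≤ (S:ℝ) - 2*(k:ℝ) := by
        have : ((2*k + 2*m + 2 : ℕ) : ℝ) ≤ (S:ℝ) := by exact_mod_cast h2k
        push_cast at this; linarith
      have hmr : (S:ℝ) < (m:ℝ) * m := by exact_mod_cast hsq
      have hC : (0:ℝ) ≤ (S.choose k : ℝ) := by positivity
      have hmnn : (0:ℝ) ≤ (m:ℝ) := by positivity
      have h1 : (2*(m:ℝ)+2)^2 ≤ ((S:ℝ) - 2*(k:ℝ))^2 := by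
        apply pow_le_pow_left₀ (by positivity) hge
      have hD2 : 4*(S:ℝ) ≤ ((S:ℝ) - 2*(k:ℝ))^2 := by nlinarith
      have h3 := mul_le_mul_of_nonneg_left hD2 hC
      have h4 : (S:ℝ) * (4 * (S.choose k : ℝ)) = (S.choose k : ℝ) * (4*(S:ℝ)) := by ring
      linarith
    have step1 := Finset.sum_le_sum hb
    have e : ∑ k ∈ range T, (S:ℝ) * (4 * (S.choose k : ℝ))
        = (S:ℝ) * (4 * ∑ k ∈ range T, (S.choose k : ℝ)) := by
      rw [Finset.mul_sum]
      rw [Finset.mul_sum]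
    have hTS : T ≤ S + 1 := by have := hT (T-1) (by omega); omega
    have step2 : (∑ k ∈ range T, (S.choose k : ℝ) * ((S:ℝ) - 2*k)^2)
        ≤ ∑ k ∈ range (S+1), (S.choose k : ℝ) * ((S:ℝ) - 2*k)^2 := by
      apply Finset.sum_le_sum_of_subset_of_nonneg
      · exact Finset.range_subset_range.2 hTS
      · intro i _ _; positivity
    have hv := var_id S
    have hfin : (S:ℝ) * (4 * ∑ k ∈ range T, (S.choose k : ℝ)) ≤ (S:ℝ) * 2^S := by
      rw [← e]; linarith
    exact le_of_mul_le_mul_left hfin hSr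

lemma exp_aux (t : ℝ) (h0 : 0 ≤ t) (h1 : t ≤ 1/2) : Real.exp (-(2*t)) ≤ 1 - t := by
  have h2 : Real.exp (-(2*t)) * Real.exp (2*t) = 1 := by
    rw [← Real.exp_add]; simp
  have h3 : 2*t + 1 ≤ Real.exp (2*t) := Real.add_one_le_exp (2*t)
  have h4 : 0 < Real.exp (-(2*t)) := Real.exp_pos _
  nlinarith

lemma split_pow (x : ℝ) (a b : ℕ) :
    ((1+x)/2)^a * ((1-x)/2)^(a+b) = (1/2)^(a+(a+b)) * ((1-x^2)^a * (1-x)^b) := by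
  have e1 : ((1+x)/2:ℝ)^a = (1/2)^a * (1+x)^a := by rw [← mul_pow]; ring_nf
  have e2 : ∀ c:ℕ, ((1-x)/2:ℝ)^c = (1/2)^c * (1-x)^c := fun c => by rw [← mul_pow]; ring_nf
  have e3 : ((1-x^2):ℝ)^a = (1+x)^a * (1-x)^a := by rw [← mul_pow]; ring_nf
  rw [e1, e2, e3]; ring

set_option maxHeartbeats 1000000 in
/-- For `X ~ Binomial(S, 1/2 + 1/(2n))` with `n ≥ 2`: for every `c ≥ 1` there is a
constant `K > 0` such that for all sufficiently large `n`, if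
`Pr[X ≤ S/2] ≤ n^(−c)` then `S ≥ K·n²`. -/
theorem majority_sample_lower_bound (c : ℝ) (hc : 1 ≤ c) :
    ∃ K : ℝ, 0 < K ∧ ∃ N₀ : ℕ, 2 ≤ N₀ ∧ ∀ n : ℕ, N₀ ≤ n → ∀ S : ℕ,
      (∑ k ∈ Finset.range (S + 1),
          (if 2 * k ≤ S then
            (S.choose k : ℝ) * (1/2 + 1/(2*(n:ℝ)))^k * (1 - (1/2 + 1/(2*(n:ℝ))))^(S - k)
          else 0)) ≤ (n : ℝ) ^ (-c) →
      K * (n : ℝ)^2 ≤ (S : ℝ) := by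
  refine ⟨1, one_pos, 20000, by norm_num, ?_⟩
  intro n hn S htail
  by_contra hcon
  push_neg at hcon
  have hn2 : 2 ≤ n := by omega
  have hnr : (20000:ℝ) ≤ (n:ℝ) := by exact_mod_cast hn
  have hnpos : (0:ℝ) < n := by linarith only [hnr]
  have hne : (n:ℝ) ≠ 0 := ne_of_gt hnpos
  rw [one_mul, pow_two] at hcon
  have hSn : S < n * n := by exact_mod_cast hcon
  have hSlt : (S:ℝ) < (n:ℝ)*(n:ℝ) := hcon
  obtain ⟨p, hpdef⟩ : ∃ p' : ℝ, p' = 1/2 + 1/(2*(n:ℝ)) := ⟨_, rfl⟩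
  rw [← hpdef] at htail
  obtain ⟨x, hxdef⟩ : ∃ x' : ℝ, x' = 1/(n:ℝ) := ⟨_, rfl⟩
  have hx0 : 0 < x := by rw [hxdef]; positivity
  have hxn : x * n = 1 := by rw [hxdef]; field_simp
  have hx2 : x ≤ 1/2 := by
    rw [hxdef, div_le_div_iff₀ hnpos (by norm_num)]
    linarith only [hnr]
  have hp : p = (1+x)/2 := by
    rw [hpdef, hxdef, add_div, div_div, mul_comm (n:ℝ) 2]
  have hq : 1 - p = (1-x)/2 := by rw [hp]; ring
  have hppos : (0:ℝ) ≤ p := by rw [hp]; linarith only [hx0, hx2]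
  have hqpos : (0:ℝ) ≤ 1 - p := by rw [hq]; linarith only [hx0, hx2]
  obtain ⟨m, hmdef⟩ : ∃ m' : ℕ, m' = Nat.sqrt S + 1 := ⟨_, rfl⟩
  obtain ⟨T, hTdef⟩ : ∃ T' : ℕ, T' = S/2 - m := ⟨_, rfl⟩
  -- Step A: restrict the sum to the window [T, S/2]
  have hsubset : Finset.Icc T (S/2) ⊆ range (S+1) := by
    intro k hk; rw [Finset.mem_Icc] at hk; rw [Finset.mem_range]; omega
  have stepA : (∑ k ∈ Finset.Icc T (S/2), (S.choose k:ℝ) * p^k * (1-p)^(S-k))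
      ≤ ∑ k ∈ range (S+1), (if 2*k ≤ S then (S.choose k:ℝ) * p^k * (1-p)^(S-k) else 0) := by
    calc (∑ k ∈ Finset.Icc T (S/2), (S.choose k:ℝ) * p^k * (1-p)^(S-k))
        = ∑ k ∈ Finset.Icc T (S/2),
            (if 2*k ≤ S then (S.choose k:ℝ) * p^k * (1-p)^(S-k) else 0) := by
          refine Finset.sum_congr rfl (fun k hk => ?_)
          rw [Finset.mem_Icc] at hk
          rw [if_pos (by omega)]
      _ ≤ _ := by
          apply Finset.sum_le_sum_of_subset_of_nonneg hsubset
          intro i _ _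
          split
          · exact mul_nonneg (mul_nonneg (by positivity) (pow_nonneg hppos _))
              (pow_nonneg hqpos _)
          · exact le_rfl
  -- per-term lower bound on the window
  obtain ⟨A, hAdef⟩ : ∃ A' : ℝ, A' = (1-x^2)^S * (1-x)^(2*m+1) := ⟨_, rfl⟩
  have hx2nn : (0:ℝ) ≤ 1 - x^2 := by nlinarith [hx0, hx2]
  have hx2le : (1:ℝ) - x^2 ≤ 1 := by nlinarith [sq_nonneg x]
  have hxnn : (0:ℝ) ≤ 1 - x := by linarith only [hx0, hx2]
  have hxle : (1:ℝ) - x ≤ 1 := by linarith only [hx0]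
  have stepB : ∀ k ∈ Finset.Icc T (S/2), (1/2:ℝ)^S * A ≤ p^k * (1-p)^(S-k) := by
    intro k hk
    rw [Finset.mem_Icc] at hk
    have h2k : 2*k ≤ S := by omega
    have hk2m : S - 2*k ≤ 2*m+1 := by omega
    have hkS : k ≤ S := by omega
    have eq1 : p^k * (1-p)^(S-k) = (1/2)^S * ((1-x^2)^k * (1-x)^(S-2*k)) := by
      rw [hq, hp, show S - k = k + (S-2*k) from by omega, split_pow,
        show k + (k + (S-2*k)) = S from by omega]
    rw [eq1, hAdef]
    have b1 : (1-x^2:ℝ)^S ≤ (1-x^2)^k := pow_le_pow_of_le_one hx2nn hx2le hkS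
    have b2 : (1-x:ℝ)^(2*m+1) ≤ (1-x)^(S-2*k) := pow_le_pow_of_le_one hxnn hxle hk2m
    have hmul : (1-x^2:ℝ)^S * (1-x)^(2*m+1) ≤ (1-x^2)^k * (1-x)^(S-2*k) :=
      mul_le_mul b1 b2 (pow_nonneg hxnn _) (pow_nonneg hx2nn _)
    have hhalf : (0:ℝ) ≤ (1/2:ℝ)^S := by positivity
    exact mul_le_mul_of_nonneg_left hmul hhalf
  -- Step C: the window carries at least 2^S/4 of the binomial mass
  have hsqm : S < m * m := by
    have h' := Nat.lt_succ_sqrt S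
    rw [hmdef]
    simpa [Nat.succ_eq_add_one] using h'
  have hchebT : ∀ k, k < T → 2*k + 2*m + 2 ≤ S := by intro k hk; omega
  have hcheb := cheb S m T hsqm hchebT
  have hhalfsum : (2:ℝ)^S ≤ 2 * ∑ k ∈ range (S/2+1), (S.choose k:ℝ) := by
    have h' := half_sum S
    have h'' : ((2^S : ℕ):ℝ) ≤ ((2 * ∑ k ∈ range (S/2+1), S.choose k : ℕ):ℝ) := by
      exact_mod_cast h'
    push_cast at h''
    exact h''
  have hsplit : (∑ k ∈ range (S/2+1), (S.choose k:ℝ))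
      = (∑ k ∈ range T, (S.choose k:ℝ)) + ∑ k ∈ Finset.Icc T (S/2), (S.choose k:ℝ) := by
    rw [← Finset.Ico_add_one_right_eq_Icc]
    rw [← Finset.sum_range_add_sum_Ico _ (show T ≤ S/2+1 from by omega)]
  have sumC : (2:ℝ)^S/4 ≤ ∑ k ∈ Finset.Icc T (S/2), (S.choose k:ℝ) := by linarith only [hcheb, hhalfsum, hsplit]
  -- combine
  have hsum1 : ∀ k ∈ Finset.Icc T (S/2),
      (S.choose k:ℝ) * ((1/2:ℝ)^S * A) ≤ (S.choose k:ℝ) * p^k * (1-p)^(S-k) := by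
    intro k hk
    rw [mul_assoc]
    exact mul_le_mul_of_nonneg_left (stepB k hk) (by positivity)
  have hsum2 := Finset.sum_le_sum hsum1
  rw [← Finset.sum_mul] at hsum2
  have hAnn : (0:ℝ) ≤ A := by
    rw [hAdef]; exact mul_nonneg (pow_nonneg hx2nn _) (pow_nonneg hxnn _)
  have hB' : (0:ℝ) ≤ (1/2:ℝ)^S * A := mul_nonneg (by positivity) hAnn
  have hP : (2:ℝ)^S/4 * ((1/2)^S * A)
      ≤ ∑ k ∈ Finset.Icc T (S/2), (S.choose k:ℝ) * p^k * (1-p)^(S-k) :=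
    le_trans (mul_le_mul_of_nonneg_right sumC hB') hsum2
  have hpow1 : (2:ℝ)^S * (1/2:ℝ)^S = 1 := by rw [← mul_pow]; norm_num
  have hPA : A/4 ≤ ∑ k ∈ Finset.Icc T (S/2), (S.choose k:ℝ) * p^k * (1-p)^(S-k) := by
    have e : (2:ℝ)^S/4 * ((1/2)^S * A) = A/4 := by
      rw [show (2:ℝ)^S/4 * ((1/2)^S * A) = (2^S*(1/2)^S)*(A/4) from by ring, hpow1, one_mul]
    linarith only [hP, e]
  -- Step E: lower bound A by exp(-8)
  have e1exp : Real.exp (-(2:ℝ)) ≤ (1-x^2)^S := by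
    have ht : x^2 ≤ 1/2 := by nlinarith [hx0, hx2]
    have h1 : Real.exp (-(2*x^2)) ≤ 1 - x^2 := exp_aux _ (by positivity) ht
    have h2 : Real.exp (-(2*x^2))^S ≤ (1-x^2)^S := pow_le_pow_left₀ (Real.exp_pos _).le h1 S
    have h3 : Real.exp (-(2*x^2))^S = Real.exp ((S:ℕ) * (-(2*x^2))) := (Real.exp_nat_mul _ S).symm
    have h4 : Real.exp (-(2:ℝ)) ≤ Real.exp ((S:ℕ) * (-(2*x^2))) := by
      apply Real.exp_le_exp.2
      have hSx : (S:ℝ) * x^2 ≤ 1 := by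
        have hxn2 : (x*(n:ℝ))^2 = 1 := by rw [hxn]; norm_num
        nlinarith [mul_pos hx0 hx0, hSlt, hxn2]
      nlinarith [hSx]
    calc Real.exp (-(2:ℝ)) ≤ Real.exp ((S:ℕ) * (-(2*x^2))) := h4
      _ = Real.exp (-(2*x^2))^S := by rw [h3]
      _ ≤ (1-x^2)^S := h2
  have hmn : 2*m+1 ≤ 3*n := by
    have hsq' : Nat.sqrt S < n := Nat.sqrt_lt'.mpr (by rw [pow_two]; exact hSn)
    omega
  have e2exp : Real.exp (-(6:ℝ)) ≤ (1-x)^(2*m+1) := by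
    have h1 : Real.exp (-(2*x)) ≤ 1 - x := exp_aux _ hx0.le hx2
    have h2 : Real.exp (-(2*x))^(2*m+1) ≤ (1-x)^(2*m+1) :=
      pow_le_pow_left₀ (Real.exp_pos _).le h1 _
    have h3 : Real.exp (-(2*x))^(2*m+1) = Real.exp (((2*m+1:ℕ):ℝ) * (-(2*x))) :=
      (Real.exp_nat_mul _ _).symm
    have h4 : Real.exp (-(6:ℝ)) ≤ Real.exp (((2*m+1:ℕ):ℝ) * (-(2*x))) := by
      apply Real.exp_le_exp.2
      have hcast : ((2*m+1:ℕ):ℝ) ≤ 3*(n:ℝ) := by exact_mod_cast hmn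
      have hcnn : (0:ℝ) ≤ ((2*m+1:ℕ):ℝ) := by positivity
      nlinarith [hcast, hcnn, hx0, hxn]
    calc Real.exp (-(6:ℝ)) ≤ Real.exp (((2*m+1:ℕ):ℝ) * (-(2*x))) := h4
      _ = Real.exp (-(2*x))^(2*m+1) := by rw [h3]
      _ ≤ (1-x)^(2*m+1) := h2
  have hA : Real.exp (-(8:ℝ)) ≤ A := by
    rw [hAdef]
    calc Real.exp (-(8:ℝ)) = Real.exp (-(2:ℝ)) * Real.exp (-(6:ℝ)) := by
          rw [← Real.exp_add]; norm_num
      _ ≤ (1-x^2)^S * (1-x)^(2*m+1) :=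
          mul_le_mul e1exp e2exp (Real.exp_pos _).le (le_trans (Real.exp_pos _).le e1exp)
  -- numeric conclusion
  have hrp : (n:ℝ)^(-c) ≤ 1/(n:ℝ) := by
    have h1 : (n:ℝ)^(-c) ≤ (n:ℝ)^(-(1:ℝ)) :=
      Real.rpow_le_rpow_of_exponent_le (by linarith only [hnr]) (by linarith only [hc])
    rw [Real.rpow_neg_one] at h1
    rw [one_div]
    exact h1
  have hexp8 : Real.exp (8:ℝ) < 5000 := by
    have h1 : Real.exp (8:ℝ) = Real.exp 1 ^ (8:ℕ) := by
      rw [← Real.exp_nat_mul]; norm_num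
    rw [h1]
    have h2 : Real.exp 1 < 2.7182818286 := Real.exp_one_lt_d9
    calc Real.exp 1 ^ (8:ℕ) < 2.7182818286^(8:ℕ) :=
          pow_lt_pow_left₀ h2 (Real.exp_pos 1).le (by norm_num)
      _ < 5000 := by norm_num
  have hfin : 1/(n:ℝ) < Real.exp (-(8:ℝ))/4 := by
    rw [Real.exp_neg]
    have hub : 1/(n:ℝ) ≤ 1/20000 := one_div_le_one_div_of_le (by norm_num) hnr
    have h5 : (1:ℝ)/5000 < (Real.exp 8)⁻¹ := by
      rw [← one_div]
      exact one_div_lt_one_div_of_lt (Real.exp_pos 8) hexp8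
    linarith only [hub, h5]
  linarith only [stepA, hPA, htail, hA, hrp, hfin]
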